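/- Let N ≥ 1, let f : ℝ⁴ × ℝ² → ℝ⁴, φ : ℝ⁴ → ℝ, and m : ℝ⁴ → ℝ² be continuously differentiable, and fix x₀ ∈ ℝ⁴. Suppose (x₁*, …, x_N*, u₀*, …, u_{N−1}*) is a local minimizer of φ(x_N) over all sequences satisfying the discrete dynamics x_{k+1} = f(x_k, u_k) for k = 0, …, N−1 and the terminal constraint m(x_N) = 0, and suppose the derivative at the minimizer of the total constraint map (x₁, …, x_N, u₀, …, u_{N−1}) ↦ ((x_{k+1} − f(x_k, u_k))_{k=0}^{N−1}, m(x_N)) is surjective. Then there exist costates λ₁, …, λ_N ∈ ℝ⁴ and a multiplier β ∈ ℝ² such that: (i) λ_k = (∂f/∂x (x_k*, u_k*))ᵀ λ_{k+1} for k = 1, …, N−1 (the discrete costate equation); (ii) (∂f/∂u (x_k*, u_k*))ᵀ λ_{k+1} = 0 for k = 0, …, N−1 (stationarity of the Hamiltonian H_k = λ_{k+1}ᵀ f(x_k, u_k) in the control); and (iii) λ_N = ∇φ(x_N*) + (Dm(x_N*))ᵀ β (the transversality condition). -/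

import Mathlib

set_option maxHeartbeats 1000000 in
/-- First-order necessary conditions (discrete Pontryagin / Lagrange
multiplier rule) for the discrete optimal control problem: minimize φ(x_N) subject to
x_{k+1} = f(x_k, u_k), k = 0,…,N−1, and m(x_N) = 0, with x₀ fixed. Under a constraint
qualification (surjectivity of the derivative of the total constraint map at the local
minimizer), there exist costates λ₁,…,λ_N and a multiplier β satisfying the discrete
costate equation, stationarity of the Hamiltonian in the control, and the
transversality condition. -/
theorem stmt16 (N : ℕ) (hN : 1 ≤ N)
    (f : (Fin 4 → ℝ) → (Fin 2 → ℝ) → (Fin 4 → ℝ))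
    (φ : (Fin 4 → ℝ) → ℝ) (m : (Fin 4 → ℝ) → (Fin 2 → ℝ))
    (hf : ContDiff ℝ 1 (fun p : (Fin 4 → ℝ) × (Fin 2 → ℝ) => f p.1 p.2))
    (hφ : ContDiff ℝ 1 φ) (hm : ContDiff ℝ 1 m)
    (x0 : Fin 4 → ℝ)
    (x : ℕ → (Fin 4 → ℝ)) (u : ℕ → (Fin 2 → ℝ))
    (hx0 : x 0 = x0)
    (hdyn : ∀ k < N, x (k + 1) = f (x k) (u k))
    (hterm : m (x N) = 0)
    (hmin : ∃ δ > 0, ∀ (x' : ℕ → (Fin 4 → ℝ)) (u' : ℕ → (Fin 2 → ℝ)),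
      x' 0 = x0 → (∀ k < N, x' (k + 1) = f (x' k) (u' k)) → m (x' N) = 0 →
      (∀ k ≤ N, ‖x' k - x k‖ < δ) → (∀ k < N, ‖u' k - u k‖ < δ) →
      φ (x N) ≤ φ (x' N))
    (hsurj : Function.Surjective
      (fderiv ℝ
        (fun z : (Fin N → (Fin 4 → ℝ)) × (Fin N → (Fin 2 → ℝ)) =>
          ((fun k : Fin N =>
              z.1 k - f (if hk : (k : ℕ) = 0 then x0
                         else z.1 ⟨(k : ℕ) - 1, by have := k.isLt; omega⟩) (z.2 k)),
           m (z.1 ⟨N - 1, by omega⟩)))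
        ((fun k : Fin N => x ((k : ℕ) + 1)), (fun k : Fin N => u (k : ℕ))))) :
    ∃ (lam : ℕ → (Fin 4 → ℝ)) (β : Fin 2 → ℝ),
      (∀ k, 1 ≤ k → k ≤ N - 1 → ∀ i : Fin 4,
        lam k i = ∑ j : Fin 4,
          lam (k + 1) j * fderiv ℝ (fun ξ => f ξ (u k)) (x k) (Pi.single i 1) j) ∧
      (∀ k < N, ∀ i : Fin 2,
        ∑ j : Fin 4,
          lam (k + 1) j * fderiv ℝ (fun v => f (x k) v) (u k) (Pi.single i 1) j = 0) ∧
      (∀ i : Fin 4,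
        lam N i = fderiv ℝ φ (x N) (Pi.single i 1)
          + ∑ j : Fin 2, β j * fderiv ℝ m (x N) (Pi.single i 1) j) := by
  classical
  have hN1 : N - 1 < N := by omega
  set E := (Fin N → (Fin 4 → ℝ)) × (Fin N → (Fin 2 → ℝ)) with hE
  set zs : E :=
    ((fun k : Fin N => x ((k : ℕ) + 1)), (fun k : Fin N => u (k : ℕ))) with hzs
  set Df : ℕ → ((Fin 4 → ℝ) × (Fin 2 → ℝ)) →L[ℝ] (Fin 4 → ℝ) :=
    fun k => fderiv ℝ (fun p : (Fin 4 → ℝ) × (Fin 2 → ℝ) => f p.1 p.2) (x k, u k) with hDfdef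
  have hDf : ∀ k : ℕ, HasStrictFDerivAt
      (fun p : (Fin 4 → ℝ) × (Fin 2 → ℝ) => f p.1 p.2) (Df k) (x k, u k) :=
    fun k => hf.contDiffAt.hasStrictFDerivAt one_ne_zero
  set Dm := fderiv ℝ m (x N) with hDmdef
  have hDm : HasStrictFDerivAt m Dm (x N) := hm.contDiffAt.hasStrictFDerivAt one_ne_zero
  set Dφ := fderiv ℝ φ (x N) with hDφdef
  have hDφ : HasStrictFDerivAt φ Dφ (x N) := hφ.contDiffAt.hasStrictFDerivAt one_ne_zero
  set P1 : Fin N → E →L[ℝ] (Fin 4 → ℝ) :=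
    fun k => (ContinuousLinearMap.proj k).comp (ContinuousLinearMap.fst ℝ _ _) with hP1
  set P2 : Fin N → E →L[ℝ] (Fin 2 → ℝ) :=
    fun k => (ContinuousLinearMap.proj k).comp (ContinuousLinearMap.snd ℝ _ _) with hP2
  set A1 : Fin N → E →L[ℝ] (Fin 4 → ℝ) :=
    fun k => if hk : (k : ℕ) = 0 then 0 else P1 ⟨(k : ℕ) - 1, by have := k.isLt; omega⟩ with hA1
  set g' : E →L[ℝ] (Fin N → (Fin 4 → ℝ)) × (Fin 2 → ℝ) :=
    (ContinuousLinearMap.pi fun k : Fin N =>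
        P1 k - (Df (k : ℕ)).comp ((A1 k).prod (P2 k))).prod
      (Dm.comp (P1 ⟨N - 1, hN1⟩)) with hg'def
  -- previous state at the reference point
  have hprev : ∀ k : Fin N,
      (if hk : (k : ℕ) = 0 then x0
        else zs.1 ⟨(k : ℕ) - 1, by have := k.isLt; omega⟩) = x (k : ℕ) := by
    intro k
    by_cases hk0 : (k : ℕ) = 0
    · simp [hk0, ← hx0]
    · simp only [dif_neg hk0, hzs]
      show x ((k : ℕ) - 1 + 1) = x (k : ℕ)
      have h : (k : ℕ) - 1 + 1 = (k : ℕ) := by omega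
      rw [h]
  have hzN : zs.1 ⟨N - 1, hN1⟩ = x N := by
    show x (N - 1 + 1) = x N
    have h : N - 1 + 1 = N := by omega
    rw [h]
  -- strict derivative of the constraint map
  have hg : HasStrictFDerivAt
      (fun z : E =>
          ((fun k : Fin N =>
              z.1 k - f (if hk : (k : ℕ) = 0 then x0
                         else z.1 ⟨(k : ℕ) - 1, by have := k.isLt; omega⟩) (z.2 k)),
           m (z.1 ⟨N - 1, by omega⟩))) g' zs := by
    have hcomp : ∀ k : Fin N, HasStrictFDerivAt
        (fun z : E => f (if hk : (k : ℕ) = 0 then x0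
            else z.1 ⟨(k : ℕ) - 1, by have := k.isLt; omega⟩) (z.2 k))
        ((Df (k : ℕ)).comp ((A1 k).prod (P2 k))) zs := by
      intro k
      have harg : HasStrictFDerivAt
          (fun z : E => ((if hk : (k : ℕ) = 0 then x0
              else z.1 ⟨(k : ℕ) - 1, by have := k.isLt; omega⟩), z.2 k))
          ((A1 k).prod (P2 k)) zs := by
        refine HasStrictFDerivAt.prodMk ?_ ((P2 k).hasStrictFDerivAt)
        by_cases hk0 : (k : ℕ) = 0
        · simp only [hA1, dif_pos hk0]
          exact hasStrictFDerivAt_const x0 zs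
        · simp only [hA1, dif_neg hk0]
          exact (P1 _).hasStrictFDerivAt
      have h2 : HasStrictFDerivAt (fun p : (Fin 4 → ℝ) × (Fin 2 → ℝ) => f p.1 p.2) (Df (k : ℕ))
          ((if hk : (k : ℕ) = 0 then x0
              else zs.1 ⟨(k : ℕ) - 1, by have := k.isLt; omega⟩), zs.2 k) := by
        rw [hprev k]
        exact hDf (k : ℕ)
      exact h2.comp zs harg
    have hpi : HasStrictFDerivAt
        (fun z : E => (fun k : Fin N =>
            z.1 k - f (if hk : (k : ℕ) = 0 then x0
                else z.1 ⟨(k : ℕ) - 1, by have := k.isLt; omega⟩) (z.2 k)))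
        (ContinuousLinearMap.pi fun k : Fin N =>
            P1 k - (Df (k : ℕ)).comp ((A1 k).prod (P2 k))) zs := by
      apply hasStrictFDerivAt_pi''
      intro k
      rw [ContinuousLinearMap.proj_pi]
      exact ((P1 k).hasStrictFDerivAt).sub (hcomp k)
    have hsecond : HasStrictFDerivAt (fun z : E => m (z.1 ⟨N - 1, hN1⟩))
        (Dm.comp (P1 ⟨N - 1, hN1⟩)) zs := by
      have h := (hzN ▸ hDm : HasStrictFDerivAt m Dm (zs.1 ⟨N - 1, hN1⟩))
      exact h.comp zs (P1 ⟨N - 1, hN1⟩).hasStrictFDerivAt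
    exact HasStrictFDerivAt.prodMk hpi hsecond
  -- objective
  set Φf : E → ℝ := fun z => φ (z.1 ⟨N - 1, hN1⟩) with hΦf
  set Φ' : E →L[ℝ] ℝ := (Dφ.comp (P1 ⟨N - 1, hN1⟩) : E →L[ℝ] ℝ) with hΦ'def
  have hΦ : HasStrictFDerivAt Φf Φ' zs := by
    have h := (hzN ▸ hDφ : HasStrictFDerivAt φ Dφ (zs.1 ⟨N - 1, hN1⟩))
    exact h.comp zs (P1 ⟨N - 1, hN1⟩).hasStrictFDerivAt
  -- local minimality on the constraint set
  have hextr : IsLocalExtrOn Φf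
      {z : E |
        (fun z : E =>
          ((fun k : Fin N =>
              z.1 k - f (if hk : (k : ℕ) = 0 then x0
                         else z.1 ⟨(k : ℕ) - 1, by have := k.isLt; omega⟩) (z.2 k)),
           m (z.1 ⟨N - 1, by omega⟩))) z =
        (fun z : E =>
          ((fun k : Fin N =>
              z.1 k - f (if hk : (k : ℕ) = 0 then x0
                         else z.1 ⟨(k : ℕ) - 1, by have := k.isLt; omega⟩) (z.2 k)),
           m (z.1 ⟨N - 1, by omega⟩))) zs} zs := by
    obtain ⟨δ, hδpos, hminδ⟩ := hmin
    have hgzs : (fun z : E =>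
          ((fun k : Fin N =>
              z.1 k - f (if hk : (k : ℕ) = 0 then x0
                         else z.1 ⟨(k : ℕ) - 1, by have := k.isLt; omega⟩) (z.2 k)),
           m (z.1 ⟨N - 1, by omega⟩))) zs
        = (((0 : Fin N → Fin 4 → ℝ)), (0 : Fin 2 → ℝ)) := by
      have h1 : ∀ k : Fin N, zs.1 k - f (if hk : (k : ℕ) = 0 then x0
          else zs.1 ⟨(k : ℕ) - 1, by have := k.isLt; omega⟩) (zs.2 k) = 0 := by
        intro k
        rw [hprev k]
        show x ((k : ℕ) + 1) - f (x (k : ℕ)) (u (k : ℕ)) = 0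
        rw [hdyn (k : ℕ) k.isLt, sub_self]
      have h2 : m (zs.1 ⟨N - 1, hN1⟩) = 0 := by rw [hzN]; exact hterm
      show (_, _) = (((0 : Fin N → Fin 4 → ℝ)), (0 : Fin 2 → ℝ))
      rw [Prod.mk.injEq]
      exact ⟨funext h1, h2⟩
    refine IsMinFilter.isExtr ?_
    filter_upwards [mem_nhdsWithin_of_mem_nhds (Metric.ball_mem_nhds zs hδpos),
      self_mem_nhdsWithin] with z hzball hzmem
    have hznorm : ‖z - zs‖ < δ := by
      rw [← dist_eq_norm]; exact Metric.mem_ball.mp hzball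
    have hx1 : ∀ j : Fin N, ‖z.1 j - zs.1 j‖ < δ := by
      intro j
      calc ‖z.1 j - zs.1 j‖ = ‖(z - zs).1 j‖ := rfl
        _ ≤ ‖(z - zs).1‖ := norm_le_pi_norm _ j
        _ ≤ ‖z - zs‖ := norm_fst_le _
        _ < δ := hznorm
    have hx2 : ∀ j : Fin N, ‖z.2 j - zs.2 j‖ < δ := by
      intro j
      calc ‖z.2 j - zs.2 j‖ = ‖(z - zs).2 j‖ := rfl
        _ ≤ ‖(z - zs).2‖ := norm_le_pi_norm _ j
        _ ≤ ‖z - zs‖ := norm_snd_le _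
        _ < δ := hznorm
    have hzeq : (fun z : E =>
          ((fun k : Fin N =>
              z.1 k - f (if hk : (k : ℕ) = 0 then x0
                         else z.1 ⟨(k : ℕ) - 1, by have := k.isLt; omega⟩) (z.2 k)),
           m (z.1 ⟨N - 1, by omega⟩))) z
        = (((0 : Fin N → Fin 4 → ℝ)), (0 : Fin 2 → ℝ)) := Eq.trans hzmem hgzs
    have hz1 : ∀ k : Fin N, z.1 k = f (if hk : (k : ℕ) = 0 then x0
        else z.1 ⟨(k : ℕ) - 1, by have := k.isLt; omega⟩) (z.2 k) := by
      intro k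
      exact sub_eq_zero.mp (congrFun (congrArg Prod.fst hzeq) k)
    have hz2 : m (z.1 ⟨N - 1, hN1⟩) = 0 := congrArg Prod.snd hzeq
    set x' : ℕ → Fin 4 → ℝ :=
      fun k => if h : 1 ≤ k ∧ k ≤ N then z.1 ⟨k - 1, by omega⟩ else x k with hx'def
    set u' : ℕ → Fin 2 → ℝ :=
      fun k => if h : k < N then z.2 ⟨k, h⟩ else u k with hu'def
    have hx'0 : x' 0 = x0 := by
      simp only [hx'def]; rw [dif_neg (by omega)]; exact hx0
    have hx'N : x' N = z.1 ⟨N - 1, hN1⟩ := by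
      simp only [hx'def]; rw [dif_pos ⟨hN, le_rfl⟩]
    have hdyn' : ∀ k < N, x' (k + 1) = f (x' k) (u' k) := by
      intro k hk
      have h1 : x' (k + 1) = z.1 ⟨k, hk⟩ := by
        simp only [hx'def]
        rw [dif_pos (⟨by omega, by omega⟩ : 1 ≤ k + 1 ∧ k + 1 ≤ N)]
        have he : (⟨k + 1 - 1, by omega⟩ : Fin N) = ⟨k, hk⟩ := by
          rw [Fin.mk_eq_mk]; omega
        rw [he]
      rw [h1, hz1 ⟨k, hk⟩]
      by_cases hk0 : k = 0
      · subst hk0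
        rw [dif_pos (show ((⟨0, hk⟩ : Fin N) : ℕ) = 0 from rfl)]
        have ha : x' 0 = x0 := hx'0
        have hb : u' 0 = z.2 ⟨0, hk⟩ := by
          simp only [hu'def]; rw [dif_pos hk]
        rw [ha, hb]
      · rw [dif_neg (show ¬((⟨k, hk⟩ : Fin N) : ℕ) = 0 from hk0)]
        have ha : x' k = z.1 ⟨k - 1, by omega⟩ := by
          simp only [hx'def]; rw [dif_pos (⟨by omega, by omega⟩ : 1 ≤ k ∧ k ≤ N)]
        have hb : u' k = z.2 ⟨k, hk⟩ := by
          simp only [hu'def]; rw [dif_pos hk]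
        rw [ha, hb]
    have hterm' : m (x' N) = 0 := by rw [hx'N]; exact hz2
    have hclose1 : ∀ kk ≤ N, ‖x' kk - x kk‖ < δ := by
      intro kk hkk
      by_cases h : 1 ≤ kk ∧ kk ≤ N
      · simp only [hx'def]; rw [dif_pos h]
        have hlt : kk - 1 < N := by omega
        have hxe : x kk = zs.1 ⟨kk - 1, hlt⟩ := by
          show x kk = x (kk - 1 + 1)
          have heq : kk - 1 + 1 = kk := by omega
          rw [heq]
        rw [hxe]
        exact hx1 ⟨kk - 1, hlt⟩
      · simp only [hx'def]; rw [dif_neg h]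
        simpa using hδpos
    have hclose2 : ∀ kk < N, ‖u' kk - u kk‖ < δ := by
      intro kk hkk
      simp only [hu'def]; rw [dif_pos hkk]
      have hue : u kk = zs.2 ⟨kk, hkk⟩ := rfl
      rw [hue]
      exact hx2 ⟨kk, hkk⟩
    have hfinal := hminδ x' u' hx'0 hdyn' hterm' hclose1 hclose2
    show Φf zs ≤ Φf z
    have h1 : Φf z = φ (x' N) := by
      show φ (z.1 ⟨N - 1, hN1⟩) = φ (x' N)
      rw [hx'N]
    have h2 : Φf zs = φ (x N) := by
      show φ (zs.1 ⟨N - 1, hN1⟩) = φ (x N)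
      rw [hzN]
    rw [h1, h2]
    exact hfinal
  obtain ⟨Λ, Λ₀, hne, hall⟩ := hextr.exists_linear_map_of_hasStrictFDerivAt hg hΦ
  have hfd : fderiv ℝ
      (fun z : E =>
          ((fun k : Fin N =>
              z.1 k - f (if hk : (k : ℕ) = 0 then x0
                         else z.1 ⟨(k : ℕ) - 1, by have := k.isLt; omega⟩) (z.2 k)),
           m (z.1 ⟨N - 1, by omega⟩))) zs = g' := hg.hasFDerivAt.fderiv
  rw [hfd] at hsurj
  have hΛ₀ : Λ₀ ≠ 0 := by
    intro h0
    apply hne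
    have hΛ0 : Λ = 0 := by
      apply LinearMap.ext; intro w
      obtain ⟨v, hv⟩ := hsurj w
      have h := hall v
      rw [h0, zero_smul, add_zero] at h
      rw [← hv]; simpa using h
    rw [hΛ0, h0]; rfl
  set μ : Module.Dual ℝ ((Fin N → (Fin 4 → ℝ)) × (Fin 2 → ℝ)) := (-Λ₀)⁻¹ • Λ with hμdef
  have hμ : ∀ v : E, μ (g' v) = Φ' v := by
    intro v
    have h := hall v
    have h2 : Λ (g' v) = -Λ₀ * Φ' v := by
      have : Λ (g' v) + Λ₀ * Φ' v = 0 := by simpa [smul_eq_mul] using h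
      linarith
    show (-Λ₀)⁻¹ • Λ (g' v) = Φ' v
    rw [smul_eq_mul, h2]
    field_simp
  -- expansion of μ on basis vectors
  have hμ1 : ∀ (kk : Fin N) (w : Fin 4 → ℝ),
      μ (Pi.single kk w, 0) = ∑ j : Fin 4, w j * μ (Pi.single kk (Pi.single j 1), 0) := by
    intro kk w
    have h1 : Pi.single kk w = ∑ j : Fin 4, w j • (Pi.single kk (Pi.single j (1 : ℝ)) : Fin N → Fin 4 → ℝ) := by
      funext l a
      by_cases hl : l = kk
      · subst hl
        simp [Pi.single_apply, Finset.sum_apply, mul_ite, Finset.sum_ite_eq,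
          Finset.sum_ite_eq', eq_comm]
      · simp [Pi.single_eq_of_ne hl, Finset.sum_apply, Pi.single_apply, hl]
    have hw : ((Pi.single kk w, 0) : (Fin N → Fin 4 → ℝ) × (Fin 2 → ℝ))
        = ∑ j : Fin 4, w j • ((Pi.single kk (Pi.single j 1), 0) :
            (Fin N → Fin 4 → ℝ) × (Fin 2 → ℝ)) := by
      rw [Prod.ext_iff]
      constructor
      · simp only [Prod.fst_sum, Prod.smul_mk]
        exact h1
      · simp [Prod.snd_sum, Prod.smul_mk]
    rw [hw, map_sum]
    simp only [← Prod.smul_mk_zero, map_smul, smul_eq_mul]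
  have hμ2 : ∀ b : Fin 2 → ℝ,
      μ ((0 : Fin N → Fin 4 → ℝ), b) = ∑ j : Fin 2, b j * μ (0, Pi.single j 1) := by
    intro b
    have h1 : b = ∑ j : Fin 2, b j • (Pi.single j (1 : ℝ) : Fin 2 → ℝ) := by
      funext a
      simp [Finset.sum_apply, Pi.single_apply, mul_ite, Finset.sum_ite_eq,
        Finset.sum_ite_eq', eq_comm]
    have hw : (((0 : Fin N → Fin 4 → ℝ), b) : (Fin N → Fin 4 → ℝ) × (Fin 2 → ℝ))
        = ∑ j : Fin 2, b j • (((0 : Fin N → Fin 4 → ℝ), Pi.single j 1) :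
            (Fin N → Fin 4 → ℝ) × (Fin 2 → ℝ)) := by
      rw [Prod.ext_iff]
      constructor
      · simp [Prod.fst_sum, Prod.smul_mk]
      · simp only [Prod.snd_sum, Prod.smul_mk]
        exact h1
    rw [hw, map_sum]
    simp only [← Prod.smul_zero_mk, map_smul, smul_eq_mul]
  -- partial derivatives of f
  have hDu : ∀ k : ℕ, fderiv ℝ (fun v => f (x k) v) (u k)
      = (Df k).comp ((0 : (Fin 2 → ℝ) →L[ℝ] (Fin 4 → ℝ)).prod
          (ContinuousLinearMap.id ℝ (Fin 2 → ℝ))) := by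
    intro k
    have h1 : HasFDerivAt (fun v : Fin 2 → ℝ => ((x k : Fin 4 → ℝ), v))
        ((0 : (Fin 2 → ℝ) →L[ℝ] (Fin 4 → ℝ)).prod (ContinuousLinearMap.id ℝ (Fin 2 → ℝ)))
        (u k) := HasFDerivAt.prodMk (hasFDerivAt_const (x k) (u k)) (hasFDerivAt_id (u k))
    exact (((hDf k).hasFDerivAt).comp (u k) h1).fderiv
  have hDx : ∀ k : ℕ, fderiv ℝ (fun ξ => f ξ (u k)) (x k)
      = (Df k).comp ((ContinuousLinearMap.id ℝ (Fin 4 → ℝ)).prod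
          (0 : (Fin 4 → ℝ) →L[ℝ] (Fin 2 → ℝ))) := by
    intro k
    have h1 : HasFDerivAt (fun ξ : Fin 4 → ℝ => (ξ, (u k : Fin 2 → ℝ)))
        ((ContinuousLinearMap.id ℝ (Fin 4 → ℝ)).prod (0 : (Fin 4 → ℝ) →L[ℝ] (Fin 2 → ℝ)))
        (x k) := HasFDerivAt.prodMk (hasFDerivAt_id (x k)) (hasFDerivAt_const (u k) (x k))
    exact (((hDf k).hasFDerivAt).comp (x k) h1).fderiv
  have hg'app : ∀ (a : Fin N → Fin 4 → ℝ) (b : Fin N → Fin 2 → ℝ), g' (a, b) =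
      ((fun k : Fin N => a k - Df (k : ℕ) (A1 k (a, b), b k)), Dm (a ⟨N - 1, hN1⟩)) := by
    intro a b
    rfl
  have hμval : ∀ (a : Fin N → Fin 4 → ℝ) (b : Fin N → Fin 2 → ℝ),
      μ (g' (a, b)) = Dφ (a ⟨N - 1, hN1⟩) := by
    intro a b
    rw [hμ (a, b)]
    rfl
  set lam : ℕ → Fin 4 → ℝ := fun k => if h : 1 ≤ k ∧ k ≤ N then
      (fun i => μ (Pi.single (⟨k - 1, by omega⟩ : Fin N) (Pi.single i 1), 0)) else 0 with hlamdef
  set β : Fin 2 → ℝ := fun j => -μ ((0 : Fin N → Fin 4 → ℝ), Pi.single j 1) with hβdef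
  have hlamval : ∀ (k : ℕ) (hk1 : 1 ≤ k) (hk2 : k ≤ N) (hk' : k - 1 < N) (i : Fin 4),
      lam k i = μ (Pi.single (⟨k - 1, hk'⟩ : Fin N) (Pi.single i 1), 0) := by
    intro k hk1 hk2 hk' i
    simp only [hlamdef]
    rw [dif_pos ⟨hk1, hk2⟩]
  refine ⟨lam, β, ?_, ?_, ?_⟩
  · -- costate equation
    intro k hk1 hk2 i
    have hkN : k < N := by omega
    have hk1N : k - 1 < N := by omega
    have hv := hμval (Pi.single (⟨k - 1, hk1N⟩ : Fin N) (Pi.single i 1))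
      (0 : Fin N → Fin 2 → ℝ)
    rw [hg'app] at hv
    have hone : (fun kk : Fin N =>
        (Pi.single (⟨k - 1, hk1N⟩ : Fin N) (Pi.single i (1 : ℝ)) : Fin N → Fin 4 → ℝ) kk
          - Df (kk : ℕ) (A1 kk (Pi.single (⟨k - 1, hk1N⟩ : Fin N) (Pi.single i 1),
              (0 : Fin N → Fin 2 → ℝ)), (0 : Fin N → Fin 2 → ℝ) kk))
        = Pi.single (⟨k - 1, hk1N⟩ : Fin N) (Pi.single i 1)
          - Pi.single (⟨k, hkN⟩ : Fin N) (Df k (Pi.single i 1, 0)) := by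
      funext kk
      have hA : A1 kk (Pi.single (⟨k - 1, hk1N⟩ : Fin N) (Pi.single i 1),
          (0 : Fin N → Fin 2 → ℝ))
          = if (kk : ℕ) = k then Pi.single i 1 else 0 := by
        simp only [hA1]
        by_cases h0 : (kk : ℕ) = 0
        · rw [dif_pos h0, if_neg (by omega)]
          rfl
        · rw [dif_neg h0]
          show (Pi.single (⟨k - 1, hk1N⟩ : Fin N) (Pi.single i (1 : ℝ)) : Fin N → Fin 4 → ℝ)
              ⟨(kk : ℕ) - 1, by have := kk.isLt; omega⟩ = _
          rw [Pi.single_apply]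
          by_cases hkk : (kk : ℕ) = k
          · rw [if_pos (by rw [Fin.mk_eq_mk]; omega), if_pos hkk]
          · rw [if_neg (by rw [Fin.mk_eq_mk]; omega), if_neg hkk]
      rw [hA, Pi.sub_apply]
      by_cases h2 : kk = (⟨k, hkN⟩ : Fin N)
      · subst h2
        rw [if_pos (show ((⟨k, hkN⟩ : Fin N) : ℕ) = k from rfl), Pi.single_eq_same,
          Pi.single_eq_of_ne (show (⟨k, hkN⟩ : Fin N) ≠ ⟨k - 1, hk1N⟩ from by
            rw [ne_eq, Fin.mk_eq_mk]; omega)]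
        rfl
      · rw [if_neg (show ¬((kk : ℕ) = k) from fun hc => h2 (by
          rw [Fin.ext_iff]; exact hc)), Pi.single_eq_of_ne h2]
        by_cases h1 : kk = (⟨k - 1, hk1N⟩ : Fin N)
        · subst h1
          rw [Pi.single_eq_same]
          show Pi.single i (1 : ℝ) - Df (((⟨k - 1, hk1N⟩ : Fin N) : ℕ)) 0
              = Pi.single i 1 - 0
          rw [map_zero]
        · rw [Pi.single_eq_of_ne h1]
          show (0 : Fin 4 → ℝ) - Df ((kk : ℕ)) 0 = 0 - 0
          rw [map_zero]
    rw [hone] at hv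
    have hvtop : (Pi.single (⟨k - 1, hk1N⟩ : Fin N) (Pi.single i (1 : ℝ)) :
        Fin N → Fin 4 → ℝ) ⟨N - 1, hN1⟩ = 0 :=
      Pi.single_eq_of_ne (show (⟨N - 1, hN1⟩ : Fin N) ≠ ⟨k - 1, hk1N⟩ from by
        rw [ne_eq, Fin.mk_eq_mk]; omega) _
    rw [hvtop, map_zero, map_zero] at hv
    have hsub : ((Pi.single (⟨k - 1, hk1N⟩ : Fin N) (Pi.single i (1 : ℝ))
          - Pi.single (⟨k, hkN⟩ : Fin N) (Df k (Pi.single i 1, 0)), (0 : Fin 2 → ℝ)) :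
        (Fin N → Fin 4 → ℝ) × (Fin 2 → ℝ))
        = (Pi.single (⟨k - 1, hk1N⟩ : Fin N) (Pi.single i (1 : ℝ)), (0 : Fin 2 → ℝ))
          - (Pi.single (⟨k, hkN⟩ : Fin N) (Df k (Pi.single i 1, 0)), (0 : Fin 2 → ℝ)) := by
      rw [Prod.mk_sub_mk, sub_zero]
    rw [hsub, map_sub] at hv
    rw [hμ1 (⟨k, hkN⟩ : Fin N) (Df k (Pi.single i 1, 0))] at hv
    rw [hDx k, hlamval k hk1 (by omega) hk1N i]
    have hl2 : ∀ j : Fin 4, lam (k + 1) j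
        = μ (Pi.single (⟨k, hkN⟩ : Fin N) (Pi.single j 1), 0) := by
      intro j
      rw [hlamval (k + 1) (by omega) (by omega) (by omega) j]
      rw [show (⟨k + 1 - 1, by omega⟩ : Fin N) = (⟨k, hkN⟩ : Fin N) from by
        rw [Fin.mk_eq_mk]; omega]
    have hsum : ∑ j : Fin 4, lam (k + 1) j
        * ((Df k).comp ((ContinuousLinearMap.id ℝ (Fin 4 → ℝ)).prod
            (0 : (Fin 4 → ℝ) →L[ℝ] (Fin 2 → ℝ)))) (Pi.single i 1) j
        = ∑ j : Fin 4, Df k (Pi.single i 1, 0) j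
            * μ (Pi.single (⟨k, hkN⟩ : Fin N) (Pi.single j 1), 0) := by
      refine Finset.sum_congr rfl fun j _ => ?_
      rw [hl2 j, mul_comm]
      rfl
    rw [hsum]
    exact sub_eq_zero.mp hv
  · -- stationarity in the control
    intro k hk i
    have hv := hμval (0 : Fin N → Fin 4 → ℝ) (Pi.single (⟨k, hk⟩ : Fin N) (Pi.single i 1))
    rw [hg'app] at hv
    have hone : (fun kk : Fin N => (0 : Fin N → Fin 4 → ℝ) kk
          - Df (kk : ℕ) (A1 kk ((0 : Fin N → Fin 4 → ℝ),
              Pi.single (⟨k, hk⟩ : Fin N) (Pi.single i 1)),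
            (Pi.single (⟨k, hk⟩ : Fin N) (Pi.single i (1 : ℝ)) : Fin N → Fin 2 → ℝ) kk))
        = Pi.single (⟨k, hk⟩ : Fin N) (-(Df k (0, Pi.single i 1))) := by
      funext kk
      have hA : A1 kk ((0 : Fin N → Fin 4 → ℝ),
          Pi.single (⟨k, hk⟩ : Fin N) (Pi.single i 1)) = 0 := by
        simp only [hA1]
        by_cases h0 : (kk : ℕ) = 0
        · rw [dif_pos h0]; rfl
        · rw [dif_neg h0]; rfl
      rw [hA]
      by_cases h2 : kk = (⟨k, hk⟩ : Fin N)
      · subst h2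
        rw [Pi.single_eq_same, Pi.single_eq_same]
        show (0 : Fin 4 → ℝ) - Df k (0, Pi.single i 1) = -(Df k (0, Pi.single i 1))
        rw [zero_sub]
      · rw [Pi.single_eq_of_ne h2, Pi.single_eq_of_ne h2]
        show (0 : Fin 4 → ℝ) - Df ((kk : ℕ)) 0 = 0
        rw [map_zero, sub_zero]
    rw [hone] at hv
    have htop : (0 : Fin N → Fin 4 → ℝ) ⟨N - 1, hN1⟩ = (0 : Fin 4 → ℝ) := rfl
    rw [htop, map_zero, map_zero] at hv
    rw [hμ1] at hv
    rw [hDu k]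
    have hl2 : ∀ j : Fin 4, lam (k + 1) j
        = μ (Pi.single (⟨k, hk⟩ : Fin N) (Pi.single j 1), 0) := by
      intro j
      rw [hlamval (k + 1) (by omega) (by omega) (by omega) j]
      rw [show (⟨k + 1 - 1, by omega⟩ : Fin N) = (⟨k, hk⟩ : Fin N) from by
        rw [Fin.mk_eq_mk]; omega]
    have hsum : ∑ j : Fin 4, lam (k + 1) j
        * ((Df k).comp ((0 : (Fin 2 → ℝ) →L[ℝ] (Fin 4 → ℝ)).prod
            (ContinuousLinearMap.id ℝ (Fin 2 → ℝ)))) (Pi.single i 1) j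
        = -∑ j : Fin 4, (-(Df k (0, Pi.single i 1))) j
            * μ (Pi.single (⟨k, hk⟩ : Fin N) (Pi.single j 1), 0) := by
      rw [← Finset.sum_neg_distrib]
      refine Finset.sum_congr rfl fun j _ => ?_
      rw [hl2 j]
      show μ (Pi.single (⟨k, hk⟩ : Fin N) (Pi.single j 1), 0) * Df k (0, Pi.single i 1) j
          = -((-(Df k (0, Pi.single i 1))) j
            * μ (Pi.single (⟨k, hk⟩ : Fin N) (Pi.single j 1), 0))
      rw [Pi.neg_apply, neg_mul, neg_neg, mul_comm]
    rw [hsum, hv, neg_zero]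
  · -- transversality
    intro i
    have hv := hμval (Pi.single (⟨N - 1, hN1⟩ : Fin N) (Pi.single i 1))
      (0 : Fin N → Fin 2 → ℝ)
    rw [hg'app] at hv
    have hone : (fun kk : Fin N =>
        (Pi.single (⟨N - 1, hN1⟩ : Fin N) (Pi.single i (1 : ℝ)) : Fin N → Fin 4 → ℝ) kk
          - Df (kk : ℕ) (A1 kk (Pi.single (⟨N - 1, hN1⟩ : Fin N) (Pi.single i 1),
              (0 : Fin N → Fin 2 → ℝ)), (0 : Fin N → Fin 2 → ℝ) kk))
        = Pi.single (⟨N - 1, hN1⟩ : Fin N) (Pi.single i 1) := by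
      funext kk
      have hA : A1 kk (Pi.single (⟨N - 1, hN1⟩ : Fin N) (Pi.single i 1),
          (0 : Fin N → Fin 2 → ℝ)) = 0 := by
        simp only [hA1]
        by_cases h0 : (kk : ℕ) = 0
        · rw [dif_pos h0]; rfl
        · rw [dif_neg h0]
          show (Pi.single (⟨N - 1, hN1⟩ : Fin N) (Pi.single i (1 : ℝ)) : Fin N → Fin 4 → ℝ)
              ⟨(kk : ℕ) - 1, by have := kk.isLt; omega⟩ = 0
          exact Pi.single_eq_of_ne (show (⟨(kk : ℕ) - 1, by have := kk.isLt; omega⟩ : Fin N)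
              ≠ ⟨N - 1, hN1⟩ from by
            rw [ne_eq, Fin.mk_eq_mk]; have := kk.isLt; omega) _
      rw [hA]
      show (Pi.single (⟨N - 1, hN1⟩ : Fin N) (Pi.single i (1 : ℝ)) : Fin N → Fin 4 → ℝ) kk
          - Df ((kk : ℕ)) 0
          = (Pi.single (⟨N - 1, hN1⟩ : Fin N) (Pi.single i (1 : ℝ)) : Fin N → Fin 4 → ℝ) kk
      rw [map_zero, sub_zero]
    rw [hone] at hv
    have htop : (Pi.single (⟨N - 1, hN1⟩ : Fin N) (Pi.single i (1 : ℝ)) :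
        Fin N → Fin 4 → ℝ) ⟨N - 1, hN1⟩ = Pi.single i 1 := Pi.single_eq_same _ _
    rw [htop] at hv
    have hsplit : ((Pi.single (⟨N - 1, hN1⟩ : Fin N) (Pi.single i (1 : ℝ)),
          Dm (Pi.single i 1)) : (Fin N → Fin 4 → ℝ) × (Fin 2 → ℝ))
        = (Pi.single (⟨N - 1, hN1⟩ : Fin N) (Pi.single i 1), 0)
          + ((0 : Fin N → Fin 4 → ℝ), Dm (Pi.single i 1)) := by
      rw [Prod.mk_add_mk, add_zero, zero_add]
    rw [hsplit, map_add, hμ2] at hv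
    rw [hlamval N hN le_rfl hN1 i]
    have hbs : ∑ j : Fin 2, β j * Dm (Pi.single i 1) j
        = -∑ j : Fin 2, Dm (Pi.single i 1) j * μ ((0 : Fin N → Fin 4 → ℝ), Pi.single j 1) := by
      rw [← Finset.sum_neg_distrib]
      refine Finset.sum_congr rfl fun j _ => ?_
      simp only [hβdef]
      rw [neg_mul, mul_comm]
    rw [hbs]
    linarith [hv]
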